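/- Let d ≥ 1 be an integer and X_d = {0, 1, …, d}. For all real numbers a, b, c, there exist real numbers a', b' ∈ [−2d², 2d²] and a sign z ∈ {−1, 1} such that for every point (x, y) ∈ X_d × X_d: (c·y ≥ a·x + b) if and only if (z·y ≥ z·(a'·x + b')). In other words, every halfplane over ℝ² agrees on the grid X_d² with a halfplane defined by a non-vertical line with coefficients bounded in absolute value by 2d². -/

import Mathlib

lemma half_le (m y : ℕ) : (m:ℝ) - 1/2 ≤ y ↔ m ≤ y := by
  constructor
  · intro h
    by_contra hc
    push_neg at hc
    have : (y:ℝ) + 1 ≤ m := by exact_mod_cast hc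
    linarith
  · intro h
    have : (m:ℝ) ≤ y := by exact_mod_cast h
    linarith

lemma key_false (d : ℕ) (hd : 1 ≤ d) (A B : ℝ)
    (h : ∀ x : ℕ, x ≤ d → (d:ℝ) < A * x + B) :
    ∃ a' b' : ℝ, a' ∈ Set.Icc (-(2 * (d : ℝ) ^ 2)) (2 * (d : ℝ) ^ 2) ∧
      b' ∈ Set.Icc ((d:ℝ) - 2 * (d : ℝ) ^ 2) (2 * (d : ℝ) ^ 2) ∧
      ∀ x y : ℕ, x ≤ d → y ≤ d → ((y:ℝ) ≥ A * x + B ↔ (y:ℝ) ≥ a' * x + b') := by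
  have hD : (1:ℝ) ≤ d := by exact_mod_cast hd
  have hdd : (d:ℝ) ≤ (d:ℝ)^2 := by nlinarith
  refine ⟨0, 2 * (d:ℝ)^2, ⟨by linarith, by linarith⟩, ⟨by linarith, le_refl _⟩, ?_⟩
  intro x y hx hy
  have hyd : (y:ℝ) ≤ d := by exact_mod_cast hy
  have h1 := h x hx
  constructor
  · intro h'; exfalso; linarith
  · intro h'; exfalso; linarith

lemma key_true (d : ℕ) (hd : 1 ≤ d) (A B : ℝ)
    (h : ∀ x : ℕ, x ≤ d → A * x + B ≤ 0) :
    ∃ a' b' : ℝ, a' ∈ Set.Icc (-(2 * (d : ℝ) ^ 2)) (2 * (d : ℝ) ^ 2) ∧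
      b' ∈ Set.Icc ((d:ℝ) - 2 * (d : ℝ) ^ 2) (2 * (d : ℝ) ^ 2) ∧
      ∀ x y : ℕ, x ≤ d → y ≤ d → ((y:ℝ) ≥ A * x + B ↔ (y:ℝ) ≥ a' * x + b') := by
  have hD : (1:ℝ) ≤ d := by exact_mod_cast hd
  have hdd : (d:ℝ) ≤ (d:ℝ)^2 := by nlinarith
  refine ⟨0, 0, ⟨by linarith, by linarith⟩, ⟨by linarith, by linarith⟩, ?_⟩
  intro x y hx hy
  have hy0 : (0:ℝ) ≤ y := Nat.cast_nonneg y
  have h1 := h x hx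
  constructor
  · intro _; linarith
  · intro _; linarith

set_option maxHeartbeats 1000000 in
lemma key (d : ℕ) (hd : 1 ≤ d) (A B : ℝ) :
    ∃ a' b' : ℝ, a' ∈ Set.Icc (-(2 * (d : ℝ) ^ 2)) (2 * (d : ℝ) ^ 2) ∧
      b' ∈ Set.Icc ((d:ℝ) - 2 * (d : ℝ) ^ 2) (2 * (d : ℝ) ^ 2) ∧
      ∀ x y : ℕ, x ≤ d → y ≤ d → ((y:ℝ) ≥ A * x + B ↔ (y:ℝ) ≥ a' * x + b') := by
  have hD : (1:ℝ) ≤ d := by exact_mod_cast hd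
  have hdd : (d:ℝ) ≤ (d:ℝ)^2 := by nlinarith
  rcases lt_or_ge (d:ℝ) A with hA | hA
  · -- A > d
    set S := (Finset.range (d+1)).filter (fun x : ℕ => A * x + B ≤ (d:ℝ)) with hSdef
    rcases S.eq_empty_or_nonempty with hSe | hSne
    · apply key_false d hd A B
      intro x hx
      by_contra hc
      push_neg at hc
      have hxS : x ∈ S := Finset.mem_filter.2 ⟨Finset.mem_range.2 (by omega), hc⟩
      simp [hSe] at hxS
    · obtain ⟨x₀, hx₀S, hmax⟩ : ∃ x₀, x₀ ∈ S ∧ ∀ x ∈ S, x ≤ x₀ :=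
        ⟨S.max' hSne, S.max'_mem hSne, fun x hx => S.le_max' x hx⟩
      have hx₀d : x₀ ≤ d := by
        have := Finset.mem_range.1 (Finset.mem_filter.1 hx₀S).1
        omega
      have hx₀D : (x₀:ℝ) ≤ d := by exact_mod_cast hx₀d
      have hr : A * x₀ + B ≤ (d:ℝ) := (Finset.mem_filter.1 hx₀S).2
      have hgt : ∀ x : ℕ, x ≤ d → x₀ < x → (d:ℝ) < A * x + B := by
        intro x hx hxx
        by_contra hc
        push_neg at hc
        have hxS : x ∈ S := Finset.mem_filter.2 ⟨Finset.mem_range.2 (by omega), hc⟩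
        have := hmax x hxS
        omega
      have hlt : ∀ x : ℕ, x < x₀ → A * x + B ≤ 0 := by
        intro x hxx
        have h1 : (x:ℝ) + 1 ≤ x₀ := by exact_mod_cast hxx
        linarith [mul_nonneg (show (0:ℝ) ≤ A by linarith) (show (0:ℝ) ≤ (x₀:ℝ) - x - 1 by linarith)]
      obtain ⟨m, hmd, hiffn, hmz⟩ :
          ∃ m : ℕ, m ≤ d ∧ (∀ y : ℕ, (A * x₀ + B ≤ (y:ℝ)) ↔ m ≤ y) ∧ (m = 0 → A * x₀ + B ≤ 0) :=
        ⟨⌈A * x₀ + B⌉₊, Nat.ceil_le.2 hr, fun y => Nat.ceil_le.symm,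
          fun h => Nat.ceil_eq_zero.1 h⟩
      have hmD : (m:ℝ) ≤ d := by exact_mod_cast hmd
      have hiff : ∀ y : ℕ, (A * x₀ + B ≤ (y:ℝ)) ↔ ((m:ℝ) - 1/2 ≤ (y:ℝ)) := by
        intro y
        rw [half_le]
        exact hiffn y
      by_cases hm0 : m = 0
      · have hr0 : A * x₀ + B ≤ 0 := hmz hm0
        by_cases hx0 : x₀ = d
        · apply key_true d hd A B
          intro x hx
          rcases lt_or_eq_of_le (show x ≤ x₀ by omega) with h | h
          · exact hlt x h
          · rw [h]; exact hr0
        · have hx0d : (x₀:ℝ) ≤ (d:ℝ) - 1 := by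
            have : x₀ + 1 ≤ d := by omega
            have := (show ((x₀+1:ℕ):ℝ) ≤ d by exact_mod_cast this)
            push_cast at this
            linarith
          refine ⟨(d:ℝ) + 1, -(1/2) - ((d:ℝ)+1) * x₀, ⟨by linarith, by linarith⟩,
            ⟨by linarith [mul_nonneg (show (0:ℝ) ≤ (d:ℝ)+1 by linarith) (show (0:ℝ) ≤ (d:ℝ) - 1 - x₀ by linarith)],
             by linarith [mul_nonneg (show (0:ℝ) ≤ (d:ℝ)+1 by linarith) (Nat.cast_nonneg x₀ : (0:ℝ) ≤ (x₀:ℝ))]⟩, ?_⟩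
          intro x y hx hy
          have hyd : (y:ℝ) ≤ d := by exact_mod_cast hy
          have hy0 : (0:ℝ) ≤ y := Nat.cast_nonneg y
          rcases le_or_gt x x₀ with h | h
          · have hxr : (x:ℝ) ≤ x₀ := by exact_mod_cast h
            have hL : A * x + B ≤ 0 := by
              rcases lt_or_eq_of_le h with h' | h'
              · exact hlt x h'
              · rw [h']; exact hr0
            constructor
            · intro _
              linarith [mul_nonneg (show (0:ℝ) ≤ (d:ℝ)+1 by linarith) (show (0:ℝ) ≤ (x₀:ℝ) - x by linarith)]
            · intro _; linarith
          · have hxr : (x₀:ℝ) + 1 ≤ x := by exact_mod_cast h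
            have hL := hgt x hx h
            constructor
            · intro h'; exfalso; linarith
            · intro h'; exfalso
              linarith [mul_nonneg (show (0:ℝ) ≤ (d:ℝ)+1 by linarith) (show (0:ℝ) ≤ (x:ℝ) - x₀ - 1 by linarith)]
      · have hm1 : (1:ℝ) ≤ m := by
          have : 1 ≤ m := Nat.one_le_iff_ne_zero.2 hm0
          exact_mod_cast this
        refine ⟨(d:ℝ) + 1/2, (m:ℝ) - 1/2 - ((d:ℝ) + 1/2) * x₀, ⟨by linarith, by linarith⟩,
          ⟨by linarith [mul_nonneg (show (0:ℝ) ≤ (d:ℝ)+1/2 by linarith) (show (0:ℝ) ≤ (d:ℝ) - x₀ by linarith), mul_nonneg (show (0:ℝ) ≤ (d:ℝ)-1 by linarith) (show (0:ℝ) ≤ 2*(d:ℝ)-1 by linarith)],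
           by linarith [mul_nonneg (show (0:ℝ) ≤ (d:ℝ)+1/2 by linarith) (Nat.cast_nonneg x₀ : (0:ℝ) ≤ x₀)]⟩, ?_⟩
        intro x y hx hy
        have hyd : (y:ℝ) ≤ d := by exact_mod_cast hy
        have hy0 : (0:ℝ) ≤ y := Nat.cast_nonneg y
        rcases lt_trichotomy x x₀ with h | h | h
        · have hxr : (x:ℝ) + 1 ≤ x₀ := by exact_mod_cast h
          have hL := hlt x h
          constructor
          · intro _
            linarith [mul_nonneg (show (0:ℝ) ≤ (d:ℝ)+1/2 by linarith) (show (0:ℝ) ≤ (x₀:ℝ) - x - 1 by linarith)]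
          · intro _; linarith
        · subst h
          have h2 := hiff y
          constructor
          · intro h'
            have := h2.1 h'
            linarith
          · intro h'
            exact h2.2 (by linarith)
        · have hxr : (x₀:ℝ) + 1 ≤ x := by exact_mod_cast h
          have hL := hgt x hx h
          constructor
          · intro h'; exfalso; linarith
          · intro h'; exfalso
            linarith [mul_nonneg (show (0:ℝ) ≤ (d:ℝ)+1/2 by linarith) (show (0:ℝ) ≤ (x:ℝ) - x₀ - 1 by linarith)]
  rcases lt_or_ge A (-(d:ℝ)) with hA' | hA'
  · -- A < -d
    set S := (Finset.range (d+1)).filter (fun x : ℕ => A * x + B ≤ (d:ℝ)) with hSdef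
    rcases S.eq_empty_or_nonempty with hSe | hSne
    · apply key_false d hd A B
      intro x hx
      by_contra hc
      push_neg at hc
      have hxS : x ∈ S := Finset.mem_filter.2 ⟨Finset.mem_range.2 (by omega), hc⟩
      simp [hSe] at hxS
    · obtain ⟨x₀, hx₀S, hmin⟩ : ∃ x₀, x₀ ∈ S ∧ ∀ x ∈ S, x₀ ≤ x :=
        ⟨S.min' hSne, S.min'_mem hSne, fun x hx => S.min'_le x hx⟩
      have hx₀d : x₀ ≤ d := by
        have := Finset.mem_range.1 (Finset.mem_filter.1 hx₀S).1
        omega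
      have hx₀D : (x₀:ℝ) ≤ d := by exact_mod_cast hx₀d
      have hr : A * x₀ + B ≤ (d:ℝ) := (Finset.mem_filter.1 hx₀S).2
      have hgt : ∀ x : ℕ, x < x₀ → (d:ℝ) < A * x + B := by
        intro x hxx
        by_contra hc
        push_neg at hc
        have hxS : x ∈ S := Finset.mem_filter.2 ⟨Finset.mem_range.2 (by omega), hc⟩
        have := hmin x hxS
        omega
      have hlt : ∀ x : ℕ, x ≤ d → x₀ < x → A * x + B ≤ 0 := by
        intro x hx hxx
        have h1 : (x₀:ℝ) + 1 ≤ x := by exact_mod_cast hxx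
        linarith [mul_nonneg (show (0:ℝ) ≤ -A by linarith) (show (0:ℝ) ≤ (x:ℝ) - x₀ - 1 by linarith)]
      obtain ⟨m, hmd, hiffn, hmz⟩ :
          ∃ m : ℕ, m ≤ d ∧ (∀ y : ℕ, (A * x₀ + B ≤ (y:ℝ)) ↔ m ≤ y) ∧ (m = 0 → A * x₀ + B ≤ 0) :=
        ⟨⌈A * x₀ + B⌉₊, Nat.ceil_le.2 hr, fun y => Nat.ceil_le.symm,
          fun h => Nat.ceil_eq_zero.1 h⟩
      have hmD : (m:ℝ) ≤ d := by exact_mod_cast hmd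
      have hiff : ∀ y : ℕ, (A * x₀ + B ≤ (y:ℝ)) ↔ ((m:ℝ) - 1/2 ≤ (y:ℝ)) := by
        intro y
        rw [half_le]
        exact hiffn y
      by_cases hm0 : m = 0
      · have hr0 : A * x₀ + B ≤ 0 := hmz hm0
        by_cases hx0 : x₀ = 0
        · apply key_true d hd A B
          intro x hx
          rcases Nat.eq_zero_or_pos x with h | h
          · rw [h, ← hx0]; exact hr0
          · exact hlt x hx (by omega)
        · have hx01 : (1:ℝ) ≤ (x₀:ℝ) := by
            have : 1 ≤ x₀ := by omega
            exact_mod_cast this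
          refine ⟨-((d:ℝ) + 1), -(1/2) + ((d:ℝ)+1) * x₀, ⟨by linarith, by linarith⟩,
            ⟨by linarith [mul_nonneg (show (0:ℝ) ≤ (d:ℝ)+1 by linarith) (Nat.cast_nonneg x₀ : (0:ℝ) ≤ (x₀:ℝ))], by linarith [mul_nonneg (show (0:ℝ) ≤ (d:ℝ)+1 by linarith) (show (0:ℝ) ≤ (d:ℝ) - x₀ by linarith)]⟩, ?_⟩
          intro x y hx hy
          have hyd : (y:ℝ) ≤ d := by exact_mod_cast hy
          have hy0 : (0:ℝ) ≤ y := Nat.cast_nonneg y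
          rcases le_or_gt x₀ x with h | h
          · have hxr : (x₀:ℝ) ≤ x := by exact_mod_cast h
            have hL : A * x + B ≤ 0 := by
              rcases lt_or_eq_of_le h with h' | h'
              · exact hlt x hx h'
              · rw [← h']; exact hr0
            constructor
            · intro _
              linarith [mul_nonneg (show (0:ℝ) ≤ (d:ℝ)+1 by linarith) (show (0:ℝ) ≤ (x:ℝ) - x₀ by linarith)]
            · intro _; linarith
          · have hxr : (x:ℝ) + 1 ≤ x₀ := by exact_mod_cast h
            have hL := hgt x h
            constructor
            · intro h'; exfalso; linarith
            · intro h'; exfalso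
              linarith [mul_nonneg (show (0:ℝ) ≤ (d:ℝ)+1 by linarith) (show (0:ℝ) ≤ (x₀:ℝ) - x - 1 by linarith)]
      · have hm1 : (1:ℝ) ≤ m := by
          have : 1 ≤ m := Nat.one_le_iff_ne_zero.2 hm0
          exact_mod_cast this
        refine ⟨-((d:ℝ) + 1/2), (m:ℝ) - 1/2 + ((d:ℝ) + 1/2) * x₀, ⟨by linarith, by linarith⟩,
          ⟨by linarith [mul_nonneg (show (0:ℝ) ≤ (d:ℝ)+1/2 by linarith) (Nat.cast_nonneg x₀ : (0:ℝ) ≤ x₀)],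
           by linarith [mul_nonneg (show (0:ℝ) ≤ (d:ℝ)+1/2 by linarith) (show (0:ℝ) ≤ (d:ℝ) - x₀ by linarith), mul_nonneg (show (0:ℝ) ≤ (d:ℝ)-1 by linarith) (show (0:ℝ) ≤ 2*(d:ℝ)-1 by linarith)]⟩, ?_⟩
        intro x y hx hy
        have hyd : (y:ℝ) ≤ d := by exact_mod_cast hy
        have hy0 : (0:ℝ) ≤ y := Nat.cast_nonneg y
        rcases lt_trichotomy x x₀ with h | h | h
        · have hxr : (x:ℝ) + 1 ≤ x₀ := by exact_mod_cast h
          have hL := hgt x h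
          constructor
          · intro h'; exfalso; linarith
          · intro h'; exfalso
            linarith [mul_nonneg (show (0:ℝ) ≤ (d:ℝ)+1/2 by linarith) (show (0:ℝ) ≤ (x₀:ℝ) - x - 1 by linarith)]
        · subst h
          have h2 := hiff y
          constructor
          · intro h'
            have := h2.1 h'
            linarith
          · intro h'
            exact h2.2 (by linarith)
        · have hxr : (x₀:ℝ) + 1 ≤ x := by exact_mod_cast h
          have hL := hlt x hx h
          constructor
          · intro _
            linarith [mul_nonneg (show (0:ℝ) ≤ (d:ℝ)+1/2 by linarith) (show (0:ℝ) ≤ (x:ℝ) - x₀ - 1 by linarith)]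
          · intro _; linarith
  · -- -d ≤ A ≤ d
    by_cases hf : ∀ x : ℕ, x ≤ d → (d:ℝ) < A * x + B
    · exact key_false d hd A B hf
    push_neg at hf
    by_cases ht : ∀ x : ℕ, x ≤ d → A * x + B ≤ 0
    · exact key_true d hd A B ht
    push_neg at ht
    obtain ⟨x₁, hx₁, h1⟩ := hf
    obtain ⟨x₂, hx₂, h2⟩ := ht
    have hx₁D : (x₁:ℝ) ≤ d := by exact_mod_cast hx₁
    have hx₂D : (x₂:ℝ) ≤ d := by exact_mod_cast hx₂
    have hx₁0 : (0:ℝ) ≤ x₁ := Nat.cast_nonneg x₁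
    have hx₂0 : (0:ℝ) ≤ x₂ := Nat.cast_nonneg x₂
    refine ⟨A, B, ⟨by nlinarith, by nlinarith⟩, ⟨?_, ?_⟩, fun x y hx hy => Iff.rfl⟩
    · linarith [mul_nonneg (show (0:ℝ) ≤ (d:ℝ) - A by linarith) hx₂0,
        mul_nonneg (show (0:ℝ) ≤ (d:ℝ) by linarith) (show (0:ℝ) ≤ (d:ℝ) - x₂ by linarith)]
    · linarith [mul_nonneg (show (0:ℝ) ≤ A + d by linarith) hx₁0,
        mul_nonneg (show (0:ℝ) ≤ (d:ℝ) by linarith) (show (0:ℝ) ≤ (d:ℝ) - x₁ by linarith)]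


set_option maxHeartbeats 1000000 in

/-- Every halfplane `{(x,y) : c·y ≥ a·x + b}` over `ℝ²` agrees on the grid
`{0,…,d}²` with a bounded-coefficient halfplane `{(x,y) : z·y ≥ z·(a'·x + b')}` where
`a', b' ∈ [−2d², 2d²]` and `z ∈ {−1, 1}`. -/
theorem stmt9 (d : ℕ) (hd : 1 ≤ d) (a b c : ℝ) :
    ∃ a' b' z : ℝ,
      a' ∈ Set.Icc (-(2 * (d : ℝ) ^ 2)) (2 * (d : ℝ) ^ 2) ∧
      b' ∈ Set.Icc (-(2 * (d : ℝ) ^ 2)) (2 * (d : ℝ) ^ 2) ∧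
      (z = -1 ∨ z = 1) ∧
      ∀ x y : ℕ, x ≤ d → y ≤ d →
        (c * y ≥ a * x + b ↔ z * y ≥ z * (a' * x + b')) := by
  have hD : (1:ℝ) ≤ d := by exact_mod_cast hd
  have hdd : (d:ℝ) ≤ (d:ℝ)^2 := by nlinarith
  rcases lt_trichotomy c 0 with hc | hc | hc
  · -- c < 0
    have hc0 : c ≠ 0 := ne_of_lt hc
    have ha : c * (a / c) = a := by field_simp
    have hb : c * (b / c) = b := by field_simp
    have hmul : ∀ u v : ℝ, (c * u ≥ a * v + b) ↔ (u ≤ a / c * v + b / c) := by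
      intro u v
      rw [show a * v + b = c * (a / c * v + b / c) by rw [mul_add, ← mul_assoc, ha, hb]]
      exact mul_le_mul_left_of_neg hc
    obtain ⟨a₁, b₁, ⟨ha1l, ha1u⟩, ⟨hb1l, hb1u⟩, hE⟩ :=
      key d hd (-(a / c)) ((d:ℝ) - b / c)
    refine ⟨-a₁, (d:ℝ) - b₁, -1, ⟨by linarith, by linarith⟩, ⟨by linarith, by linarith⟩,
      Or.inl rfl, ?_⟩
    intro x y hx hy
    have hE' := hE x (d - y) hx (Nat.sub_le d y)
    have hcast : ((d - y : ℕ) : ℝ) = (d:ℝ) - y := by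
      rw [Nat.cast_sub hy]
    rw [hcast] at hE'
    rw [hmul (y:ℝ) (x:ℝ)]
    constructor
    · intro h
      have h1 : ((d:ℝ) - y) ≥ -(a / c) * x + ((d:ℝ) - b / c) := by linarith
      have h2 := hE'.1 h1
      linarith
    · intro h
      have h1 : ((d:ℝ) - y) ≥ a₁ * x + b₁ := by linarith
      have h2 := hE'.2 h1
      linarith
  · -- c = 0
    subst hc
    set T := (Finset.range (d+1)).filter (fun x : ℕ => 0 < a * (x:ℝ) + b) with hTdef
    rcases T.eq_empty_or_nonempty with hTe | hTne
    · refine ⟨0, 0, 1, ⟨by linarith, by linarith⟩, ⟨by linarith, by linarith⟩,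
        Or.inr rfl, ?_⟩
      intro x y hx hy
      have hle : a * x + b ≤ 0 := by
        by_contra hcon
        push_neg at hcon
        have hxT : x ∈ T := Finset.mem_filter.2 ⟨Finset.mem_range.2 (by omega), hcon⟩
        simp [hTe] at hxT
      have hy0 : (0:ℝ) ≤ y := Nat.cast_nonneg y
      constructor
      · intro _; nlinarith
      · intro _; nlinarith
    · obtain ⟨ε, hεpos, hεle⟩ :
          ∃ ε : ℝ, 0 < ε ∧ ∀ x : ℕ, x ∈ T → ε ≤ a * x + b := by
        refine ⟨(T.image fun x : ℕ => a * (x:ℝ) + b).min' (hTne.image _), ?_, ?_⟩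
        · obtain ⟨x, hxT, hxe⟩ := Finset.mem_image.1
            (Finset.min'_mem _ (hTne.image (fun x : ℕ => a * (x:ℝ) + b)))
          rw [← hxe]
          exact (Finset.mem_filter.1 hxT).2
        · intro x hxT
          exact Finset.min'_le _ _ (Finset.mem_image_of_mem _ hxT)
      set K := ((d:ℝ) + 1) / ε with hKdef
      have hK0 : 0 ≤ K := by positivity
      obtain ⟨a₁, b₁, ⟨ha1l, ha1u⟩, ⟨hb1l, hb1u⟩, hE⟩ := key d hd (K * a) (K * b)
      refine ⟨a₁, b₁, 1, ⟨by linarith, by linarith⟩, ⟨by linarith, by linarith⟩,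
        Or.inr rfl, ?_⟩
      intro x y hx hy
      have hE' := hE x y hx hy
      have hyd : (y:ℝ) ≤ d := by exact_mod_cast hy
      have hy0 : (0:ℝ) ≤ y := Nat.cast_nonneg y
      have hmid : (a * x + b ≤ 0) ↔ ((y:ℝ) ≥ K * a * x + K * b) := by
        constructor
        · intro h
          have h1 : K * a * x + K * b = K * (a * x + b) := by ring
          rw [h1]
          have := mul_nonpos_of_nonneg_of_nonpos hK0 h
          linarith
        · intro h
          by_contra hcon
          push_neg at hcon
          have hxT : x ∈ T := Finset.mem_filter.2 ⟨Finset.mem_range.2 (by omega), hcon⟩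
          have h1 : ε ≤ a * x + b := hεle x hxT
          have h2 : (d:ℝ) + 1 ≤ K * (a * x + b) := by
            rw [hKdef, div_mul_eq_mul_div, le_div_iff₀ hεpos]
            nlinarith
          have h3 : K * (a * x + b) = K * a * x + K * b := by ring
          linarith
      constructor
      · intro h
        have h0 : a * x + b ≤ 0 := by linarith
        have := hE'.1 (hmid.1 h0)
        linarith
      · intro h
        have h1 : (y:ℝ) ≥ a₁ * x + b₁ := by linarith
        have h0 := hmid.2 (hE'.2 h1)
        linarith
  · -- c > 0
    have hc0 : c ≠ 0 := ne_of_gt hc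
    have ha : c * (a / c) = a := by field_simp
    have hb : c * (b / c) = b := by field_simp
    have hmul : ∀ u v : ℝ, (c * u ≥ a * v + b) ↔ (u ≥ a / c * v + b / c) := by
      intro u v
      rw [show a * v + b = c * (a / c * v + b / c) by rw [mul_add, ← mul_assoc, ha, hb]]
      exact mul_le_mul_iff_right₀ hc
    obtain ⟨a₁, b₁, ⟨ha1l, ha1u⟩, ⟨hb1l, hb1u⟩, hE⟩ := key d hd (a / c) (b / c)
    refine ⟨a₁, b₁, 1, ⟨by linarith, by linarith⟩, ⟨by linarith, by linarith⟩,
      Or.inr rfl, ?_⟩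
    intro x y hx hy
    have hE' := hE x y hx hy
    rw [hmul (y:ℝ) (x:ℝ)]
    constructor
    · intro h
      have := hE'.1 h
      linarith
    · intro h
      have h1 : (y:ℝ) ≥ a₁ * x + b₁ := by linarith
      have := hE'.2 h1
      linarith
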